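/- The total number of occurrences of nonempty palindromic factors in W_i (that is, the number of pairs of positions 1 ≤ j ≤ l ≤ |W_i| such that the factor W_i[j..l] is a palindrome, single-letter palindromes included) equals 1, 2, 3, 6 for i = 0, 1, 2, 3 respectively, and equals f_{i+3} - 2·f_{i-2} for all i > 3. -/

import Mathlib

/-- The morphism `phi` on the alphabet `ℕ`: `phi (2i) = (2i)(2i+1)` and `phi (2i+1) = (2i+2)`. -/
def phi (a : ℕ) : List ℕ := if a % 2 = 0 then [a, a + 1] else [a + 1]

/-- The finite ZWW words: `W n = phi^n(0)`, so `W 0 = 0`, `W 1 = 01`, `W 2 = 012`, `W 3 = 01223`. -/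
def W (n : ℕ) : List ℕ := (fun w => w.flatMap phi)^[n] [0]

/-- The total number of occurrences of nonempty palindromic factors in a word `w`:
the number of pairs of (0-indexed) positions `j ≤ l < |w|` such that the factor
`w[j..l]` is a palindrome. -/
def palOcc (w : List ℕ) : ℕ :=
  ((Finset.range w.length ×ˢ Finset.range w.length).filter
    (fun p => p.1 ≤ p.2 ∧
      ((w.drop p.1).take (p.2 - p.1 + 1)).reverse = (w.drop p.1).take (p.2 - p.1 + 1))).card

/-! ### Basic structure of the words `W n` -/

lemma W_succ (n : ℕ) : W (n+1) = (W n).flatMap phi := Function.iterate_succ_apply' _ _ _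

lemma phi_add_two (a : ℕ) : phi (a+2) = (phi a).map (· + 2) := by
  unfold phi
  have : (a+2) % 2 = a % 2 := by omega
  rw [this]
  split <;> simp

lemma flatMap_phi_map (w : List ℕ) :
    (w.map (· + 2)).flatMap phi = (w.flatMap phi).map (· + 2) := by
  induction w with
  | nil => simp
  | cons a w ih => simp [phi_add_two, ih]

lemma W_rec (n : ℕ) : W (n+2) = W (n+1) ++ (W n).map (· + 2) := by
  induction n with
  | zero => decide
  | succ n ih =>
    rw [W_succ (n+2), ih, List.flatMap_append, flatMap_phi_map, ← W_succ, ← W_succ]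
    rw [show n+1+1 = n+2 from rfl, ih]

lemma W_head (n : ℕ) : ∃ v, W n = 0 :: v := by
  induction n with
  | zero => exact ⟨[], rfl⟩
  | succ n ih =>
    obtain ⟨v, hv⟩ := ih
    refine ⟨1 :: v.flatMap phi, ?_⟩
    rw [W_succ, hv, List.flatMap_cons]
    rfl

lemma W_last (n : ℕ) : ∃ u, W n = u ++ [n] := by
  induction n with
  | zero => exact ⟨[], rfl⟩
  | succ n ih =>
    obtain ⟨u, hu⟩ := ih
    have hphi : ∃ s, phi n = s ++ [n+1] := by
      unfold phi
      split
      · exact ⟨[n], rfl⟩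
      · exact ⟨[], rfl⟩
    obtain ⟨s, hs⟩ := hphi
    refine ⟨u.flatMap phi ++ s, ?_⟩
    rw [W_succ, hu, List.flatMap_append, List.flatMap_cons, List.flatMap_nil,
      List.append_nil, hs, List.append_assoc]

/-! ### The chain property: any letter is at most one more than its predecessor -/

lemma chain'_phi (a : ℕ) : List.Chain' (fun a b => b ≤ a + 1) (phi a) := by
  unfold phi; split <;> simp [List.Chain']

lemma getLast?_phi (a : ℕ) : (phi a).getLast? = some (a+1) := by
  unfold phi; split <;> rfl

lemma head?_phi (a : ℕ) : (phi a).head? = some a ∨ (phi a).head? = some (a+1) := by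
  unfold phi; split
  · exact Or.inl rfl
  · exact Or.inr rfl

lemma chain'_flatMap {w : List ℕ} (h : List.Chain' (fun a b => b ≤ a+1) w) :
    List.Chain' (fun a b => b ≤ a+1) (w.flatMap phi) := by
  induction w with
  | nil => simp [List.Chain']
  | cons a w ih =>
    rw [List.flatMap_cons, List.Chain', List.isChain_append]
    refine ⟨chain'_phi a, ih (List.IsChain.tail h), ?_⟩
    intro x hx y hy
    rw [getLast?_phi] at hx
    have hxa : a + 1 = x := by simpa using hx
    subst hxa
    cases w with
    | nil => simp at hy
    | cons b w' =>
      have hb : b ≤ a + 1 := (List.isChain_cons_cons.mp h).1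
      rw [List.flatMap_cons, List.head?_append] at hy
      rcases head?_phi b with h1 | h1 <;> rw [h1] at hy <;>
        simp at hy <;> omega

lemma W_chain (n : ℕ) : List.Chain' (fun a b => b ≤ a+1) (W n) := by
  induction n with
  | zero => simp [W, List.Chain']
  | succ n ih => rw [W_succ]; exact chain'_flatMap ih

/-! ### Palindrome mirror property -/

lemma pal_mirror {w : List ℕ} {j l : ℕ} (hl : l < w.length) (hjl : j ≤ l)
    (hp : ((w.drop j).take (l - j + 1)).reverse = (w.drop j).take (l - j + 1))
    {a : ℕ} (ha1 : j ≤ a) (ha2 : a ≤ l) :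
    w[a]'(by omega) = w[j + l - a]'(by omega) := by
  set p := (w.drop j).take (l - j + 1) with hpdef
  have hplen : p.length = l - j + 1 := by
    simp only [hpdef, List.length_take, List.length_drop]
    omega
  have hget : ∀ t (ht : t < p.length) (b : ℕ) (hb : b = j + t) (hblt : b < w.length),
      p[t] = w[b]'hblt := by
    intro t ht b hb hblt
    subst hb
    simp only [hpdef]
    rw [List.getElem_take, List.getElem_drop]
  have hrev : ∀ s t (hs : s < p.length) (ht : t < p.length),
      s + t = p.length - 1 → p[s] = p[t] := by
    intro s t hs ht hst
    have h := List.getElem_of_eq hp (i := s) (by simpa using hs)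
    rw [List.getElem_reverse] at h
    have het : p.length - 1 - s = t := by omega
    subst het
    exact h.symm
  have g1 : p[a - j]'(by omega) = w[a]'(by omega) :=
    hget (a - j) (by omega) a (by omega) (by omega)
  have g2 : p[l - a]'(by omega) = w[j + l - a]'(by omega) :=
    hget (l - a) (by omega) (j + l - a) (by omega) (by omega)
  have g3 : p[a - j]'(by omega) = p[l - a]'(by omega) :=
    hrev (a - j) (l - a) (by omega) (by omega) (by omega)
  exact g1.symm.trans (g3.trans g2)

/-! ### No palindromic factor crosses the junction `W (n+1) | (W n).map (·+2)` -/

lemma no_cross {n : ℕ} (hn : 3 ≤ n) {j l : ℕ}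
    (hj : j < (W (n+1)).length) (hl1 : (W (n+1)).length ≤ l) (hl2 : l < (W (n+2)).length) :
    ¬ (((W (n+2)).drop j).take (l - j + 1)).reverse
        = ((W (n+2)).drop j).take (l - j + 1) := by
  intro hp
  set L := (W (n+1)).length with hL
  have hjl : j ≤ l := le_trans (le_of_lt hj) hl1
  obtain ⟨u', hu'⟩ := W_last (n+1)
  obtain ⟨v', hv'⟩ := W_head n
  have hrec := W_rec n
  have hLu : L = u'.length + 1 := by rw [hL, hu']; simp
  have hLpos : 1 ≤ L := by omega
  have hwlen : (W (n+2)).length = L + (W n).length := by rw [hrec, hL]; simp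
  have hWnpos : 0 < (W n).length := by rw [hv']; simp
  -- letter at position L-1 is n+1
  have h1 : (W (n+2))[L-1]'(by omega) = n + 1 := by
    rw [List.getElem_of_eq hrec (by omega)]
    rw [List.getElem_append_left (by omega : L - 1 < (W (n+1)).length)]
    rw [List.getElem_of_eq hu' (by omega)]
    exact List.getElem_concat_length (by omega) _
  -- letter at position L is 2
  have h2 : (W (n+2))[L]'(by omega) = 2 := by
    rw [List.getElem_of_eq hrec (by omega)]
    rw [List.getElem_append_right (by omega : (W (n+1)).length ≤ L)]
    rw [List.getElem_map]
    rw [List.getElem_of_eq hv' (by omega)]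
    simp [show L - (W (n+1)).length = 0 from by omega]
  -- mirror positions
  have e1 := pal_mirror (w := W (n+2)) (by omega) hjl hp (a := L-1) (by omega) (by omega)
  have e2 := pal_mirror (w := W (n+2)) (by omega) hjl hp (a := L) (by omega) hl1
  have e1' : (W (n+2))[j + l - (L-1)]'(by omega) = n + 1 := e1.symm.trans h1
  have e2' : (W (n+2))[j + l - L]'(by omega) = 2 := e2.symm.trans h2
  have hmlt : (j + l - L) + 1 < (W (n+2)).length := by omega
  -- chain property
  have gci : ∀ (x : List ℕ) (i i' : ℕ) (h : i = i') (hi' : i' < x.length),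
      x[i]'(h ▸ hi') = x[i']'hi' := by
    intro x i i' h hi'
    subst h
    rfl
  have v2 : (W (n+2))[(j + l - L) + 1]'(by omega) = n + 1 :=
    (gci (W (n+2)) _ _ (by omega : (j + l - L) + 1 = j + l - (L-1)) (by omega)).trans e1'
  have hch := W_chain (n+2)
  rw [List.Chain', List.isChain_iff_getElem] at hch
  have hcm := hch (j + l - L) (by omega)
  have hfin : n + 1 ≤ 2 + 1 := by
    calc n + 1 = (W (n+2))[(j + l - L) + 1]'(by omega) := v2.symm
    _ ≤ (W (n+2))[j + l - L]'(by omega) + 1 := hcm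
    _ = 2 + 1 := congrArg (· + 1) e2'
  omega

/-! ### `palOcc` of a map by `+2` -/

lemma palOcc_map2 (w : List ℕ) : palOcc (w.map (· + 2)) = palOcc w := by
  unfold palOcc
  rw [List.length_map]
  congr 1
  apply Finset.filter_congr
  intro p _
  have hinj : Function.Injective (fun x : ℕ => x + 2) := fun a b h => by simpa using h
  constructor <;> intro ⟨h1, h2⟩ <;> refine ⟨h1, ?_⟩
  · rw [← List.map_drop, ← List.map_take, ← List.map_reverse] at h2
    exact List.map_injective_iff.mpr hinj h2
  · rw [← List.map_drop, ← List.map_take, ← List.map_reverse, h2]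

/-! ### Splitting `palOcc` over an append with no crossing palindromes -/

lemma palOcc_append {u v : List ℕ}
    (h : ∀ j l, j < u.length → u.length ≤ l → l < u.length + v.length →
      ¬ (((u ++ v).drop j).take (l - j + 1)).reverse = ((u ++ v).drop j).take (l - j + 1)) :
    palOcc (u ++ v) = palOcc u + palOcc v := by
  classical
  unfold palOcc
  rw [List.length_append]
  set n := u.length with hn
  set m := v.length with hm
  set P : ℕ × ℕ → Prop := fun p => p.1 ≤ p.2 ∧
      (((u ++ v).drop p.1).take (p.2 - p.1 + 1)).reverse
        = ((u ++ v).drop p.1).take (p.2 - p.1 + 1) with hP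
  set S := (Finset.range (n+m) ×ˢ Finset.range (n+m)).filter P with hS
  have hsplit := Finset.card_filter_add_card_filter_not
    (s := S) (p := fun p => p.2 < n)
  rw [← hsplit]
  congr 1
  · -- pairs inside u
    apply Finset.card_bij' (fun p _ => p) (fun p _ => p)
    · intro p hp
      simp only [hS, Finset.mem_filter, Finset.mem_product, Finset.mem_range, hP] at hp ⊢
      obtain ⟨⟨⟨hp1, hp2⟩, hple, hpal⟩, hplt⟩ := hp
      refine ⟨⟨by omega, hplt⟩, hple, ?_⟩
      rw [List.drop_append_of_le_length (by omega),
        List.take_append_of_le_length (by simp [hn]; omega)] at hpal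
      exact hpal
    · intro p hp
      simp only [hS, Finset.mem_filter, Finset.mem_product, Finset.mem_range, hP] at hp ⊢
      obtain ⟨⟨hp1, hp2⟩, hple, hpal⟩ := hp
      refine ⟨⟨⟨by omega, by omega⟩, hple, ?_⟩, hp2⟩
      rw [List.drop_append_of_le_length (by omega),
        List.take_append_of_le_length (by simp [hn]; omega)]
      exact hpal
    · intros; rfl
    · intros; rfl
  · -- pairs inside v
    apply Finset.card_bij' (fun p _ => (p.1 - n, p.2 - n)) (fun p _ => (p.1 + n, p.2 + n))
    · intro p hp
      simp only [hS, Finset.mem_filter, Finset.mem_product, Finset.mem_range, hP, not_lt] at hp ⊢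
      obtain ⟨⟨⟨hp1, hp2⟩, hple, hpal⟩, hplt⟩ := hp
      -- p.1 ≥ n, else crossing palindrome
      have hj : n ≤ p.1 := by
        by_contra hc
        exact h p.1 p.2 (by omega) hplt (by omega) hpal
      refine ⟨⟨by omega, by omega⟩, by omega, ?_⟩
      have hd : (u ++ v).drop p.1 = v.drop (p.1 - n) := by
        conv_lhs => rw [show p.1 = u.length + (p.1 - n) from by omega]
        exact List.drop_length_add_append _
      rw [hd] at hpal
      have : p.2 - p.1 = p.2 - n - (p.1 - n) := by omega
      rw [← this]
      exact hpal
    · intro p hp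
      simp only [hS, Finset.mem_filter, Finset.mem_product, Finset.mem_range, hP, not_lt] at hp ⊢
      obtain ⟨⟨hp1, hp2⟩, hple, hpal⟩ := hp
      refine ⟨⟨⟨by omega, by omega⟩, by omega, ?_⟩, by omega⟩
      have hd : (u ++ v).drop (p.1 + n) = v.drop p.1 := by
        conv_lhs => rw [show p.1 + n = u.length + p.1 from by omega]
        exact List.drop_length_add_append _
      rw [hd]
      have : p.2 + n - (p.1 + n) = p.2 - p.1 := by omega
      rw [this]
      exact hpal
    · intro p hp
      simp only [hS, Finset.mem_filter, Finset.mem_product, Finset.mem_range, hP, not_lt] at hp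
      obtain ⟨⟨⟨hp1, hp2⟩, hple, hpal⟩, hplt⟩ := hp
      have hj : n ≤ p.1 := by
        by_contra hc
        exact h p.1 p.2 (by omega) hplt (by omega) hpal
      simp only [Prod.ext_iff]
      constructor <;> omega
    · intro p hp
      simp only [Prod.ext_iff]
      constructor <;> omega

/-! ### The Fibonacci recurrence -/

lemma palOcc_W4 : palOcc (W 4) = 11 := by decide
lemma palOcc_W5 : palOcc (W 5) = 17 := by decide

lemma palOcc_rec (n : ℕ) (hn : 3 ≤ n) :
    palOcc (W (n+2)) = palOcc (W (n+1)) + palOcc (W n) := by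
  have hlen : (W (n+2)).length = (W (n+1)).length + (W n).length := by
    rw [W_rec n]; simp
  have hcross : ∀ j l, j < (W (n+1)).length → (W (n+1)).length ≤ l →
      l < (W (n+1)).length + ((W n).map (· + 2)).length →
      ¬ (((W (n+1) ++ (W n).map (· + 2)).drop j).take (l - j + 1)).reverse
        = ((W (n+1) ++ (W n).map (· + 2)).drop j).take (l - j + 1) := by
    intro j l hj hl1 hl2
    rw [← W_rec n]
    exact no_cross hn hj hl1 (by rw [hlen]; simpa using hl2)
  calc palOcc (W (n+2)) = palOcc (W (n+1) ++ (W n).map (· + 2)) := by rw [← W_rec n]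
    _ = palOcc (W (n+1)) + palOcc ((W n).map (· + 2)) := palOcc_append hcross
    _ = palOcc (W (n+1)) + palOcc (W n) := by rw [palOcc_map2]

lemma palOcc_key : ∀ n : ℕ, palOcc (W (n+4)) + 2 * Nat.fib (n+2) = Nat.fib (n+7) := by
  intro n
  induction n using Nat.twoStepInduction with
  | zero => rw [palOcc_W4]; decide
  | one => rw [palOcc_W5]; decide
  | more n ih1 ih2 =>
    show palOcc (W (n+6)) + 2 * Nat.fib (n+4) = Nat.fib (n+9)
    have i1 : palOcc (W (n+4)) + 2 * Nat.fib (n+2) = Nat.fib (n+7) := ih1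
    have i2 : palOcc (W (n+5)) + 2 * Nat.fib (n+3) = Nat.fib (n+8) := ih2
    have hrec : palOcc (W (n+6)) = palOcc (W (n+5)) + palOcc (W (n+4)) :=
      palOcc_rec (n+4) (by omega)
    have f1 : Nat.fib (n+9) = Nat.fib (n+7) + Nat.fib (n+8) := Nat.fib_add_two
    have f2 : Nat.fib (n+4) = Nat.fib (n+2) + Nat.fib (n+3) := Nat.fib_add_two
    omega

/-- The total number of palindromes in `W i` (single-letter palindromes included) is
`1, 2, 3, 6` for `i = 0, 1, 2, 3` respectively, and `f (i+3) - 2 * f (i-2)` for `i > 3`. -/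
theorem zww_total_palindromes :
    palOcc (W 0) = 1 ∧ palOcc (W 1) = 2 ∧ palOcc (W 2) = 3 ∧ palOcc (W 3) = 6 ∧
    ∀ i : ℕ, 3 < i → palOcc (W i) = Nat.fib (i + 3) - 2 * Nat.fib (i - 2) := by
  refine ⟨by decide, by decide, by decide, by decide, ?_⟩
  intro i hi
  obtain ⟨n, rfl⟩ : ∃ n, i = n + 4 := ⟨i - 4, by omega⟩
  have hk := palOcc_key n
  have e1 : n + 4 + 3 = n + 7 := by ring
  have e2 : n + 4 - 2 = n + 2 := by omega
  rw [e1, e2]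
  omega
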